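/- Let E be a bicategory with objects A, B and a 1-morphism J : B → A with two-sided dual J̄ : A → B, such that the duality 2-morphisms can be chosen with η_J ∘ e_J invertible in End(1_A) and d_J ∘ ε_J invertible in End(1_B). Then the functor X ↦ X ∘ J from Hom_E(A,A) to Hom_E(B,A) is faithful, and every 1-morphism X : B → A is a retract of Y ∘ J for some Y : A → A (namely Y = X ∘ J̄). -/

import Mathlib

open CategoryTheory Bicategory

/-- In a bicategory, if `J : B ⟶ A` has a two-sided dual `J̄ : A ⟶ B` whose duality 2-cells
can be chosen with `η_J ∘ e_J` and `d_J ∘ ε_J` invertible, then the functor `X ↦ X ∘ J`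
from `Hom(A,A)` to `Hom(B,A)` is faithful, and every `X : B ⟶ A` is a retract of `Y ∘ J`
for some `Y : A ⟶ A`. -/
theorem dual_one_morphism_faithful_dominant
    {B : Type*} [Bicategory B] {a b : B}
    (J : b ⟶ a) (Jbar : a ⟶ b)
    (e : 𝟙 a ⟶ Jbar ≫ J) (d : J ≫ Jbar ⟶ 𝟙 b)
    (εJ : 𝟙 b ⟶ J ≫ Jbar) (η : Jbar ≫ J ⟶ 𝟙 a)
    -- `(e, d)` exhibits an adjunction `J ⊣ J̄` (triangle identities):
    (zig₁ : (ρ_ J).inv ≫ (J ◁ e) ≫ (α_ J Jbar J).inv ≫ (d ▷ J) ≫ (λ_ J).hom = 𝟙 J)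
    (zig₂ : (λ_ Jbar).inv ≫ (e ▷ Jbar) ≫ (α_ Jbar J Jbar).hom ≫ (Jbar ◁ d) ≫ (ρ_ Jbar).hom
        = 𝟙 Jbar)
    -- `(ε, η)` exhibits an adjunction `J̄ ⊣ J` (triangle identities):
    (zag₁ : (λ_ J).inv ≫ (εJ ▷ J) ≫ (α_ J Jbar J).hom ≫ (J ◁ η) ≫ (ρ_ J).hom = 𝟙 J)
    (zag₂ : (ρ_ Jbar).inv ≫ (Jbar ◁ εJ) ≫ (α_ Jbar J Jbar).inv ≫ (η ▷ Jbar) ≫ (λ_ Jbar).hom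
        = 𝟙 Jbar)
    -- invertibility of `η ∘ e` in `End(𝟙 A)` and of `d ∘ ε` in `End(𝟙 B)`:
    (hinv₁ : IsIso (e ≫ η)) (hinv₂ : IsIso (εJ ≫ d)) :
    (∀ (X Y : a ⟶ a) (f g : X ⟶ Y), J ◁ f = J ◁ g → f = g) ∧
    (∀ X : b ⟶ a, ∃ (Y : a ⟶ a) (i : X ⟶ J ≫ Y) (p : J ≫ Y ⟶ X), i ≫ p = 𝟙 X) := by
  constructor
  · intro X Y f g h
    haveI : IsIso (e ≫ η) := hinv₁
    have key : ∀ (k : X ⟶ Y),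
        (e ▷ X) ≫ (α_ Jbar J X).hom ≫ (Jbar ◁ (J ◁ k)) ≫ (α_ Jbar J Y).inv ≫ (η ▷ Y)
          = ((e ≫ η) ▷ X) ≫ ((λ_ X).hom ≫ k ≫ (λ_ Y).inv) := by
      intro k
      have h1 : (α_ Jbar J X).hom ≫ (Jbar ◁ (J ◁ k)) ≫ (α_ Jbar J Y).inv
          = (Jbar ≫ J) ◁ k := by simp
      rw [reassoc_of% h1, whisker_exchange, ← comp_whiskerRight_assoc]
      congr 1
      simp
    have hk : ((e ≫ η) ▷ X) ≫ ((λ_ X).hom ≫ f ≫ (λ_ Y).inv)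
        = ((e ≫ η) ▷ X) ≫ ((λ_ X).hom ≫ g ≫ (λ_ Y).inv) := by
      rw [← key f, ← key g, h]
    have := (cancel_epi ((e ≫ η) ▷ X)).mp hk
    have := (cancel_epi (λ_ X).hom).mp this
    exact (cancel_mono (λ_ Y).inv).mp this
  · intro X
    haveI : IsIso (εJ ≫ d) := hinv₂
    refine ⟨Jbar ≫ X,
      (λ_ X).inv ≫ (εJ ▷ X) ≫ (α_ J Jbar X).hom,
      (α_ J Jbar X).inv ≫ ((d ≫ inv (εJ ≫ d)) ▷ X) ≫ (λ_ X).hom, ?_⟩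
    simp [← comp_whiskerRight_assoc, ← comp_whiskerRight]
    rw [show εJ ≫ d ≫ inv (εJ ≫ d) = 𝟙 (𝟙 b) from by
      rw [← Category.assoc, IsIso.hom_inv_id]]
    simp
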